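/- Identification under sample selection bias and selective labelling (Section 5, equation (10)): Let μ be a probability measure on 𝒳 × 𝒵 × ℝ × {0,1} (the source-domain law of (X, Z, Y, S), where S is the combined selection/labelling indicator) with μ(S=1) > 0, and let μ_S denote the conditional measure μ(· | S=1) pushed forward to 𝒳 × 𝒵 × ℝ. Let ν be a probability measure on 𝒳 × 𝒵 × ℝ (the target-domain law of (X, Z, Y)). Assume the outcome coordinate Y is integrable under μ_S and under ν, assume μ_S and ν admit a common disintegration kernel κ of the outcome given (X,Z) (encoding the conditional independence Y ⫫ D, Θ, S | X, Z), and assume ν_{XZ} ≪ (μ_S)_{XZ}. Then for every measurable g : 𝒳 × 𝒵 → ℝ that is a version of the conditional expectation of Y given the (X,Z)-coordinates under the selected source law μ_S, the conditional expectation of Y given the X-coordinate under ν equals, ν-almost everywhere, the conditional expectation of g(X,Z) given the X-coordinate under ν. In particular the unbiased target regression function E[Y | X, do(D=d, Θ=θ)] is identified from selection-biased, selectively labelled source data together with the target (X,Z)-marginal. -/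

import Mathlib

open MeasureTheory ProbabilityTheory

namespace SelectionBiasAux

variable {𝒳 𝒵 : Type*} [MeasurableSpace 𝒳] [MeasurableSpace 𝒵]

/-- Under a disintegration `ρ = (ρ_{XZ} ⊗ κ).map prodAssoc`, the function
`ω ↦ ∫ y ∂κ(ω.1, ω.2.1)` is a version of `E_ρ[Y | X, Z]`. -/
lemma condexp_proj_eq_integral_kernel
    (ρ : Measure (𝒳 × 𝒵 × ℝ)) [IsProbabilityMeasure ρ]
    (κ : Kernel (𝒳 × 𝒵) ℝ) [IsMarkovKernel κ]
    (hdis : ρ = (ρ.map (fun ω => (ω.1, ω.2.1)) ⊗ₘ κ).map MeasurableEquiv.prodAssoc)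
    (hY : Integrable (fun ω : 𝒳 × 𝒵 × ℝ => ω.2.2) ρ) :
    (fun ω : 𝒳 × 𝒵 × ℝ => ∫ y, y ∂κ (ω.1, ω.2.1)) =ᵐ[ρ]
      ρ[(fun ω : 𝒳 × 𝒵 × ℝ => ω.2.2) |
        MeasurableSpace.comap (fun ω : 𝒳 × 𝒵 × ℝ => (ω.1, ω.2.1)) inferInstance] := by
  set π : 𝒳 × 𝒵 × ℝ → 𝒳 × 𝒵 := fun ω => (ω.1, ω.2.1) with hπdef
  have hπ : Measurable π := measurable_fst.prodMk (measurable_fst.comp measurable_snd)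
  set f : 𝒳 × 𝒵 → ℝ := fun p => ∫ y, y ∂κ p with hfdef
  have hf_sm : StronglyMeasurable f :=
    MeasureTheory.StronglyMeasurable.integral_kernel_prod_right
      (f := fun (_ : 𝒳 × 𝒵) (y : ℝ) => y)
      (by exact measurable_snd.stronglyMeasurable)
  set ρXZ : Measure (𝒳 × 𝒵) := ρ.map π with hρXZ
  haveI : IsProbabilityMeasure ρXZ := Measure.isProbabilityMeasure_map hπ.aemeasurable
  set c : Measure ((𝒳 × 𝒵) × ℝ) := ρXZ ⊗ₘ κ with hc
  set e : (𝒳 × 𝒵) × ℝ ≃ᵐ 𝒳 × 𝒵 × ℝ := MeasurableEquiv.prodAssoc with he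
  have hdis' : ρ = c.map e := hdis
  -- integrability of the second coordinate on the compProd
  have hint : Integrable (fun q : (𝒳 × 𝒵) × ℝ => q.2) c := by
    have := hY
    rw [hdis'] at this
    exact (integrable_map_equiv e _).mp this
  -- integrability of f under ρXZ
  have hfint : Integrable f ρXZ := by
    have h := hint
    rw [hc, Measure.compProd] at h
    simpa [hfdef] using h.integral_compProd
  -- integrability of f ∘ π under ρ
  have hfπint : Integrable (fun ω => f (π ω)) ρ := by
    rw [hdis']
    refine (integrable_map_equiv e _).mpr ?_
    have h1 : Integrable f (c.map Prod.fst) := by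
      rw [← Measure.fst, hc, Measure.fst_compProd]; exact hfint
    exact (integrable_map_measure hf_sm.aestronglyMeasurable measurable_fst.aemeasurable).mp h1
  have hm : MeasurableSpace.comap π inferInstance ≤ (inferInstance : MeasurableSpace (𝒳 × 𝒵 × ℝ)) :=
    hπ.comap_le
  haveI : SigmaFinite (ρ.trim hm) := by
    haveI := isFiniteMeasure_trim (μ := ρ) hm
    infer_instance
  refine ae_eq_condExp_of_forall_setIntegral_eq hm hY
    (fun s _ _ => hfπint.integrableOn) ?_ ?_
  · rintro s ⟨t, ht, rfl⟩ -
    -- LHS : ∫ over π⁻¹ t of f ∘ π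
    have hL : ∫ ω in π ⁻¹' t, f (π ω) ∂ρ = ∫ p in t, f p ∂ρXZ := by
      rw [hρXZ, setIntegral_map ht hf_sm.aestronglyMeasurable hπ.aemeasurable]
    have hR : ∫ ω in π ⁻¹' t, ω.2.2 ∂ρ = ∫ p in t, f p ∂ρXZ := by
      rw [hdis', setIntegral_map_equiv]
      have hset : e ⁻¹' (π ⁻¹' t) = t ×ˢ Set.univ := by
        ext q; simp [Set.mem_prod, hπdef, he, MeasurableEquiv.prodAssoc]
      rw [hset]
      have hfun : (fun x : (𝒳 × 𝒵) × ℝ => (e x).2.2) = fun x : (𝒳 × 𝒵) × ℝ => x.2 := rfl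
      rw [hfun, Measure.setIntegral_compProd ht MeasurableSet.univ
        (hint.integrableOn : IntegrableOn _ (t ×ˢ Set.univ) c)]
      simp [hfdef]
    rw [hL, hR]
  · exact StronglyMeasurable.aestronglyMeasurable
      (hf_sm.comp_measurable (measurable_iff_comap_le.mpr le_rfl))

end SelectionBiasAux

/-- **Identification under sample selection bias and selective labelling**
(Section 5, eq. (10)). -/
theorem identification_under_selection_bias
    {𝒳 𝒵 : Type*} [MeasurableSpace 𝒳] [StandardBorelSpace 𝒳]
    [MeasurableSpace 𝒵] [StandardBorelSpace 𝒵]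
    (μ : Measure (𝒳 × 𝒵 × ℝ × Bool)) [IsProbabilityMeasure μ]
    (ν : Measure (𝒳 × 𝒵 × ℝ)) [IsProbabilityMeasure ν]
    (hS : 0 < μ {ω : 𝒳 × 𝒵 × ℝ × Bool | ω.2.2.2 = true})
    (μS : Measure (𝒳 × 𝒵 × ℝ))
    (hμS : μS = (ProbabilityTheory.cond μ {ω : 𝒳 × 𝒵 × ℝ × Bool | ω.2.2.2 = true}).map
      (fun ω : 𝒳 × 𝒵 × ℝ × Bool => (ω.1, ω.2.1, ω.2.2.1)))
    (κ : Kernel (𝒳 × 𝒵) ℝ) [IsMarkovKernel κ]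
    (hdisμS : μS = (μS.map (fun ω => (ω.1, ω.2.1)) ⊗ₘ κ).map MeasurableEquiv.prodAssoc)
    (hdisν : ν = (ν.map (fun ω => (ω.1, ω.2.1)) ⊗ₘ κ).map MeasurableEquiv.prodAssoc)
    (hYμS : Integrable (fun ω : 𝒳 × 𝒵 × ℝ => ω.2.2) μS)
    (hYν : Integrable (fun ω : 𝒳 × 𝒵 × ℝ => ω.2.2) ν)
    (hac : ν.map (fun ω : 𝒳 × 𝒵 × ℝ => (ω.1, ω.2.1)) ≪
      μS.map (fun ω : 𝒳 × 𝒵 × ℝ => (ω.1, ω.2.1)))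
    (g : 𝒳 × 𝒵 → ℝ) (hg : Measurable g)
    (hgμS : (fun ω : 𝒳 × 𝒵 × ℝ => g (ω.1, ω.2.1)) =ᵐ[μS]
      μS[(fun ω : 𝒳 × 𝒵 × ℝ => ω.2.2) |
        MeasurableSpace.comap (fun ω : 𝒳 × 𝒵 × ℝ => (ω.1, ω.2.1)) inferInstance]) :
    ν[(fun ω : 𝒳 × 𝒵 × ℝ => ω.2.2) |
        MeasurableSpace.comap (fun ω : 𝒳 × 𝒵 × ℝ => ω.1) inferInstance] =ᵐ[ν]
      ν[(fun ω : 𝒳 × 𝒵 × ℝ => g (ω.1, ω.2.1)) |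
        MeasurableSpace.comap (fun ω : 𝒳 × 𝒵 × ℝ => ω.1) inferInstance] := by
  set π : 𝒳 × 𝒵 × ℝ → 𝒳 × 𝒵 := fun ω => (ω.1, ω.2.1) with hπdef
  have hπ : Measurable π := measurable_fst.prodMk (measurable_fst.comp measurable_snd)
  set f : 𝒳 × 𝒵 → ℝ := fun p => ∫ y, y ∂κ p with hfdef
  have hf_sm : StronglyMeasurable f :=
    MeasureTheory.StronglyMeasurable.integral_kernel_prod_right
      (f := fun (_ : 𝒳 × 𝒵) (y : ℝ) => y)
      (by exact measurable_snd.stronglyMeasurable)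
  have hf_meas : Measurable f := hf_sm.measurable
  -- μS is a probability measure
  haveI hPμS : IsProbabilityMeasure μS := by
    rw [hμS]
    haveI : IsProbabilityMeasure
        (ProbabilityTheory.cond μ {ω : 𝒳 × 𝒵 × ℝ × Bool | ω.2.2.2 = true}) :=
      cond_isProbabilityMeasure hS.ne'
    exact Measure.isProbabilityMeasure_map
      (measurable_fst.prodMk (measurable_fst.comp measurable_snd |>.prodMk
        (measurable_fst.comp (measurable_snd.comp measurable_snd)))).aemeasurable
  -- version under μS
  have hμS_ver := SelectionBiasAux.condexp_proj_eq_integral_kernel μS κ hdisμS hYμS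
  have hν_ver := SelectionBiasAux.condexp_proj_eq_integral_kernel ν κ hdisν hYν
  -- g = f a.e. under (μS).map π
  have hgf_map : g =ᵐ[μS.map π] f := by
    refine (MeasureTheory.ae_map_iff hπ.aemeasurable ?_).mpr ?_
    · exact measurableSet_eq_fun hg hf_meas
    · exact hgμS.trans hμS_ver.symm
  -- transfer to ν.map π by absolute continuity
  have hgf_ν : g =ᵐ[ν.map π] f := hac.ae_eq hgf_map
  -- pull back to ν
  have hgf : (fun ω : 𝒳 × 𝒵 × ℝ => g (π ω)) =ᵐ[ν] fun ω => f (π ω) :=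
    ae_of_ae_map hπ.aemeasurable hgf_ν
  -- g ∘ π is a version of E_ν[Y | X, Z]
  have hgν : (fun ω : 𝒳 × 𝒵 × ℝ => g (π ω)) =ᵐ[ν]
      ν[(fun ω : 𝒳 × 𝒵 × ℝ => ω.2.2) |
        MeasurableSpace.comap π inferInstance] := hgf.trans hν_ver
  -- tower property
  have hle : MeasurableSpace.comap (fun ω : 𝒳 × 𝒵 × ℝ => ω.1) inferInstance ≤
      MeasurableSpace.comap π inferInstance := by
    have : (fun ω : 𝒳 × 𝒵 × ℝ => ω.1) = Prod.fst ∘ π := rfl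
    rw [this, ← MeasurableSpace.comap_comp]
    exact MeasurableSpace.comap_mono measurable_fst.comap_le
  have htower := condExp_condExp_of_le hle hπ.comap_le
    (f := fun ω : 𝒳 × 𝒵 × ℝ => ω.2.2) (μ := ν)
  calc ν[(fun ω : 𝒳 × 𝒵 × ℝ => ω.2.2) |
        MeasurableSpace.comap (fun ω : 𝒳 × 𝒵 × ℝ => ω.1) inferInstance]
      =ᵐ[ν] ν[ν[(fun ω : 𝒳 × 𝒵 × ℝ => ω.2.2) | MeasurableSpace.comap π inferInstance] |
        MeasurableSpace.comap (fun ω : 𝒳 × 𝒵 × ℝ => ω.1) inferInstance] := htower.symm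
    _ =ᵐ[ν] ν[(fun ω : 𝒳 × 𝒵 × ℝ => g (π ω)) |
        MeasurableSpace.comap (fun ω : 𝒳 × 𝒵 × ℝ => ω.1) inferInstance] :=
      condExp_congr_ae hgν.symm
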